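/- For any superport network with m > p, with L its response matrix, C the response matrix of the electrical network obtained by unifying all the superports, and C̃ the matrix obtained from C by removing the last row and the last column: det L · Σ_{I,J valid} det C_I^J = det C̃, where the sum is over all ordered pairs of valid sets I, J; moreover Σ_{I,J valid} det C_I^J ≠ 0, so det L = det C̃ / Σ_{I,J valid} det C_I^J. -/

import Mathlib

open Finset BigOperators
open scoped Classical

namespace Superport

/-- A superport network: a finite connected simple graph on `Fin n` with conductances `c`
and `p` nonempty pairwise disjoint superports `A 0, …, A (p-1)` occupying the initial
segment of the vertices, ordered consecutively. -/
structure Network where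
  n : ℕ
  p : ℕ
  graph : SimpleGraph (Fin n)
  c : Fin n → Fin n → ℝ
  A : Fin p → Finset (Fin n)
  p_pos : 0 < p
  connected : graph.Connected
  c_symm : ∀ k l, c k l = c l k
  c_pos : ∀ k l, graph.Adj k l → 0 < c k l
  c_zero : ∀ k l, ¬ graph.Adj k l → c k l = 0
  A_nonempty : ∀ i, (A i).Nonempty
  A_disjoint : ∀ i j, i ≠ j → Disjoint (A i) (A j)
  A_ordered : ∀ i j u v, i < j → u ∈ A i → v ∈ A j → u < v
  boundary_initial : ∀ v : Fin n, (∃ i, v ∈ A i) ↔ (v : ℕ) < ∑ i, (A i).card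

namespace Network

variable (N : Network)

/-- The set of boundary vertices. -/
def M : Finset (Fin N.n) := Finset.univ.biUnion N.A

/-- The number of boundary vertices. -/
def m : ℕ := N.M.card

theorem mem_M_iff {v : Fin N.n} : v ∈ N.M ↔ ∃ i, v ∈ N.A i := by
  simp [M, Finset.mem_biUnion]

/-- The root of the superport of a boundary vertex `v` (the vertex of maximal number
in the superport containing `v`); for interior `v` we set `root v = v`. -/
noncomputable def root (v : Fin N.n) : Fin N.n :=
  if h : ∃ i, v ∈ N.A i then (N.A h.choose).max' ⟨v, h.choose_spec⟩ else v

/-- The index of the last superport. -/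
def lastPort : Fin N.p := ⟨N.p - 1, Nat.sub_lt N.p_pos Nat.one_pos⟩

theorem M_nonempty : N.M.Nonempty := by
  obtain ⟨v, hv⟩ := N.A_nonempty N.lastPort
  exact ⟨v, N.mem_M_iff.mpr ⟨N.lastPort, hv⟩⟩

theorem root_mem {v : Fin N.n} (hv : v ∈ N.M) : N.root v ∈ N.M := by
  have h : ∃ i, v ∈ N.A i := N.mem_M_iff.mp hv
  rw [root, dif_pos h]
  exact N.mem_M_iff.mpr ⟨h.choose, (N.A h.choose).max'_mem _⟩

theorem root_eq_self_of_max {v : Fin N.n} (hv : v ∈ N.M) (hmax : ∀ u ∈ N.M, u ≤ v) :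
    N.root v = v := by
  have h : ∃ i, v ∈ N.A i := N.mem_M_iff.mp hv
  rw [root, dif_pos h]
  exact le_antisymm (hmax _ (N.mem_M_iff.mpr ⟨h.choose, (N.A h.choose).max'_mem _⟩))
    (Finset.le_max' _ _ h.choose_spec)

/-- Axioms (C), (I), (P), (B) for voltages `U`, currents `I`, and prescribed voltage
differences `ΔU` (only the values of `ΔU` at non-root boundary vertices are relevant). -/
def Axioms (ΔU U : Fin N.n → ℝ) (I : Fin N.n → Fin N.n → ℝ) : Prop :=
  (∀ k l, I k l = N.c k l * (U k - U l)) ∧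
  (∀ k, k ∉ N.M → ∑ l, I k l = 0) ∧
  (∀ i : Fin N.p, i ≠ N.lastPort → ∑ k ∈ N.A i, ∑ l, I k l = 0) ∧
  (∀ k, k ∈ N.M → N.root k ≠ k → U k - U (N.root k) = ΔU k)

/-- The weight of a subgraph: the product of the conductances of its edges. -/
noncomputable def weight (H : SimpleGraph (Fin N.n)) : ℝ :=
  ∏ e ∈ (Set.toFinite H.edgeSet).toFinset, Sym2.lift ⟨N.c, N.c_symm⟩ e

/-- The number of edges of a subgraph. -/
noncomputable def edgeCount (H : SimpleGraph (Fin N.n)) : ℕ :=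
  (Set.toFinite H.edgeSet).toFinset.card

/-- Two vertices lie in a common superport. -/
def samePort (u v : Fin N.n) : Prop := ∃ i, u ∈ N.A i ∧ v ∈ N.A i

/-- The `X`-equivalence: two boundary vertices not in `X` are equivalent iff they lie in
the same superport; each interior vertex and each vertex of `X` forms a singleton class.
For `X = ∅` this is the equivalence relation `∼`. -/
def xSetoid (X : Set (Fin N.n)) : Setoid (Fin N.n) where
  r u v := u = v ∨ (u ∉ X ∧ v ∉ X ∧ N.samePort u v)
  iseqv := by
    constructor
    · intro u; exact Or.inl rfl
    · rintro u v (rfl | ⟨hu, hv, i, hui, hvi⟩)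
      · exact Or.inl rfl
      · exact Or.inr ⟨hv, hu, i, hvi, hui⟩
    · rintro u v w huv hvw
      rcases huv with rfl | ⟨hu, hv, i, hui, hvi⟩
      · exact hvw
      rcases hvw with rfl | ⟨hv', hw, j, hvj, hwj⟩
      · exact Or.inr ⟨hu, hv, i, hui, hvi⟩
      · have hij : i = j := by
          by_contra hij
          exact (Finset.disjoint_left.mp (N.A_disjoint i j hij) hvi) hvj
        exact Or.inr ⟨hu, hw, i, hui, hij ▸ hwj⟩

/-- The quotient of a graph `H` by an equivalence relation `s`: classes `a ≠ b` are
adjacent iff some representatives are adjacent in `H`. -/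
def quotGraph (H : SimpleGraph (Fin N.n)) (s : Setoid (Fin N.n)) :
    SimpleGraph (Quotient s) where
  Adj a b := a ≠ b ∧ ∃ u v, H.Adj u v ∧ Quotient.mk s u = a ∧ Quotient.mk s v = b
  symm := by
    constructor
    rintro a b ⟨hab, u, v, huv, hu, hv⟩
    exact ⟨hab.symm, v, u, huv.symm, hv, hu⟩
  loopless := by
    constructor
    rintro a ⟨hab, -⟩
    exact hab rfl

/-- A spanning forest of the network. -/
def IsSpanningForest (H : SimpleGraph (Fin N.n)) : Prop := H ≤ N.graph ∧ H.IsAcyclic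

/-- A spanning forest becomes a spanning tree in the quotient by the `X`-equivalence
(in the multigraph sense): the quotient is connected and the number of edges of the
forest is one less than the number of equivalence classes.  For `X = {i}` this is
"valid relative to the vertex `i`"; for `X = ∅` this is "valid". -/
def IsValidRel (X : Set (Fin N.n)) (H : SimpleGraph (Fin N.n)) : Prop :=
  N.IsSpanningForest H ∧ (N.quotGraph H (N.xSetoid X)).Connected ∧
    N.edgeCount H + 1 = Nat.card (Quotient (N.xSetoid X))

/-- A valid forest: a spanning forest which becomes a spanning tree in the quotient
by the equivalence `∼`. -/
def IsValidForest (H : SimpleGraph (Fin N.n)) : Prop := N.IsValidRel ∅ H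

/-- The sign `sgn(H, i, j)` of a spanning forest `H` with respect to vertices `i, j`. -/
noncomputable def sgnIJ (H : SimpleGraph (Fin N.n)) (i j : Fin N.n) : ℝ :=
  if i = j ∨ ¬ (N.quotGraph H (N.xSetoid {i, j})).Reachable
      (Quotient.mk (N.xSetoid {i, j}) i) (Quotient.mk (N.xSetoid {i, j}) j)
  then 1 else -1

/-- The type of non-root boundary vertices. -/
abbrev NonRoot := {v : Fin N.n // v ∈ N.M ∧ N.root v ≠ v}

/-- The type of boundary vertices. -/
abbrev Bdry := {v : Fin N.n // v ∈ N.M}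

/-- `L` is the response matrix of the superport network: for any admissible voltages and
currents, the incoming currents at the non-root boundary vertices are obtained from the
prescribed voltage differences by multiplication by `L`. -/
def IsResponse (L : Matrix N.NonRoot N.NonRoot ℝ) : Prop :=
  ∀ (ΔU U : Fin N.n → ℝ) (I : Fin N.n → Fin N.n → ℝ), N.Axioms ΔU U I →
    ∀ x : N.NonRoot, (∑ l, I x.1 l) = ∑ y : N.NonRoot, L x y * ΔU y.1

/-- `C` is the response matrix of the electrical network obtained by unifying all the
superports: same graph and conductances, boundary vertices `M`; axioms (C) and (I). -/
def IsElecResponse (C : Matrix N.Bdry N.Bdry ℝ) : Prop :=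
  ∀ (Ub : N.Bdry → ℝ) (U : Fin N.n → ℝ) (I : Fin N.n → Fin N.n → ℝ),
    (∀ k l, I k l = N.c k l * (U k - U l)) →
    (∀ k, k ∉ N.M → ∑ l, I k l = 0) →
    (∀ v : N.Bdry, U v.1 = Ub v) →
    ∀ v : N.Bdry, (∑ l, I v.1 l) = ∑ u : N.Bdry, C v u * Ub u

/-- The sum of the weights of all valid forests. -/
noncomputable def validForestSum : ℝ :=
  ∑ H ∈ Finset.univ.filter (fun H => N.IsValidForest H), N.weight H

end Network
end Superport

namespace Superport
namespace Network

variable (N : Network)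

/-- The last (maximal) boundary vertex; it is the root of the last superport. -/
noncomputable def lastV : Fin N.n := N.M.max' N.M_nonempty

/-- Boundary vertices other than the last one. -/
abbrev Bdry' := {v : Fin N.n // v ∈ N.M ∧ v ≠ N.lastV}

/-- `C̃`: the response matrix of the unified electrical network with the last row and
column removed. -/
noncomputable def Ctilde (C : Matrix N.Bdry N.Bdry ℝ) : Matrix N.Bdry' N.Bdry' ℝ :=
  fun v w => C ⟨v.1, v.2.1⟩ ⟨w.1, w.2.1⟩

/-- The sum `Σ_{I,J valid} det C_I^J` of all valid minors of `C`: a valid set is a set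
`{i_1,…,i_{p−1}}` with `i_k ∈ A_k` for `k = 1,…,p−1` (hence automatically listed in
increasing order), encoded by the selection functions `ι, κ`. -/
noncomputable def validMinorSum (C : Matrix N.Bdry N.Bdry ℝ) : ℝ :=
  ∑ ι ∈ Finset.univ.filter (fun ι : Fin (N.p - 1) → N.Bdry =>
      ∀ k, (ι k).1 ∈ N.A (Fin.castLE (Nat.sub_le N.p 1) k)),
    ∑ κ ∈ Finset.univ.filter (fun κ : Fin (N.p - 1) → N.Bdry =>
      ∀ k, (κ k).1 ∈ N.A (Fin.castLE (Nat.sub_le N.p 1) k)),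
      Matrix.det (Matrix.of fun k k' => C (ι k) (κ k'))

end Network


namespace Network

variable (N : Network)

/-! ### Basic facts about conductances and the Laplacian -/

theorem c_nonneg (k l : Fin N.n) : 0 ≤ N.c k l := by
  by_cases h : N.graph.Adj k l
  · exact (N.c_pos k l h).le
  · rw [N.c_zero k l h]

/-- The "Laplacian": total current flowing out of `k` for voltages `U`. -/
noncomputable def lap (U : Fin N.n → ℝ) (k : Fin N.n) : ℝ := ∑ l, N.c k l * (U k - U l)

theorem lap_add (U V : Fin N.n → ℝ) (k : Fin N.n) :
    N.lap (U + V) k = N.lap U k + N.lap V k := by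
  simp only [lap, Pi.add_apply, ← Finset.sum_add_distrib]
  exact Finset.sum_congr rfl fun l _ => by ring

theorem energy (U : Fin N.n → ℝ) :
    2 * ∑ k, U k * N.lap U k = ∑ k, ∑ l, N.c k l * (U k - U l) ^ 2 := by
  have hswap : ∑ k, ∑ l, N.c k l * (U k * (U k - U l))
      = ∑ k, ∑ l, N.c k l * (U l * (U l - U k)) := by
    rw [Finset.sum_comm]
    refine Finset.sum_congr rfl fun k _ => Finset.sum_congr rfl fun l _ => ?_
    rw [N.c_symm]
  have h1 : ∀ k, U k * N.lap U k = ∑ l, N.c k l * (U k * (U k - U l)) := by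
    intro k
    rw [lap, Finset.mul_sum]
    exact Finset.sum_congr rfl fun l _ => by ring
  calc 2 * ∑ k, U k * N.lap U k
      = (∑ k, ∑ l, N.c k l * (U k * (U k - U l)))
        + ∑ k, ∑ l, N.c k l * (U l * (U l - U k)) := by
        rw [← hswap]; simp only [h1]; ring
    _ = ∑ k, ∑ l, N.c k l * (U k - U l) ^ 2 := by
        rw [← Finset.sum_add_distrib]
        refine Finset.sum_congr rfl fun k _ => ?_
        rw [← Finset.sum_add_distrib]
        exact Finset.sum_congr rfl fun l _ => by ring

theorem const_of_adj_eq (U : Fin N.n → ℝ) (h : ∀ k l, N.graph.Adj k l → U k = U l) :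
    ∀ u v, U u = U v := by
  intro u v
  obtain ⟨w⟩ := N.connected.preconnected u v
  induction w with
  | nil => rfl
  | cons hadj _ ih => exact (h _ _ hadj).trans ih

theorem const_of_energy_zero (U : Fin N.n → ℝ) (h : ∑ k, U k * N.lap U k = 0) :
    ∀ u v, U u = U v := by
  refine N.const_of_adj_eq U (fun k l hadj => ?_)
  have h2 : ∑ k, ∑ l, N.c k l * (U k - U l) ^ 2 = 0 := by
    rw [← N.energy, h, mul_zero]
  have hnn : ∀ k ∈ Finset.univ, (0:ℝ) ≤ ∑ l, N.c k l * (U k - U l) ^ 2 :=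
    fun k _ => Finset.sum_nonneg fun l _ =>
      mul_nonneg (N.c_nonneg k l) (sq_nonneg _)
  have h3 := (Finset.sum_eq_zero_iff_of_nonneg hnn).mp h2 k (Finset.mem_univ k)
  have hnn2 : ∀ l ∈ Finset.univ, (0:ℝ) ≤ N.c k l * (U k - U l) ^ 2 :=
    fun l _ => mul_nonneg (N.c_nonneg k l) (sq_nonneg _)
  have h4 := (Finset.sum_eq_zero_iff_of_nonneg hnn2).mp h3 l (Finset.mem_univ l)
  have hc := N.c_pos k l hadj
  have : (U k - U l) ^ 2 = 0 := by
    by_contra hne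
    exact hne (by nlinarith)
  nlinarith [sq_nonneg (U k - U l)]

/-! ### The Dirichlet problem -/

theorem exists_harmonic (x : Fin N.n → ℝ) :
    ∃ U : Fin N.n → ℝ, (∀ v ∈ N.M, U v = x v) ∧ (∀ k, k ∉ N.M → N.lap U k = 0) := by
  classical
  set Int := {v : Fin N.n // v ∉ N.M}
  let ext0 : (Int → ℝ) → (Fin N.n → ℝ) := fun u v => if h : v ∈ N.M then 0 else u ⟨v, h⟩
  have ext0_add : ∀ u u', ext0 (u + u') = ext0 u + ext0 u' := by
    intro u u'; funext v; simp only [ext0, Pi.add_apply]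
    split <;> simp
  have ext0_smul : ∀ (a : ℝ) u, ext0 (a • u) = a • ext0 u := by
    intro a u; funext v; simp only [ext0, Pi.smul_apply]
    split <;> simp
  let T : (Int → ℝ) →ₗ[ℝ] (Int → ℝ) :=
    { toFun := fun u k => N.lap (ext0 u) k.1
      map_add' := by
        intro u u'; funext k; simp only [ext0_add]
        exact N.lap_add _ _ _
      map_smul' := by
        intro a u; funext k
        simp only [ext0_smul, RingHom.id_apply, Pi.smul_apply, smul_eq_mul, lap]
        rw [Finset.mul_sum]
        refine Finset.sum_congr rfl fun l _ => ?_
        ring }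
  have hTinj : Function.Injective T := by
    intro u u' huu
    have hker : T (u - u') = 0 := by rw [map_sub, huu, sub_self]
    have hzero : u - u' = 0 := by
      set w := u - u' with hw
      set W := ext0 w with hW
      have hWM : ∀ v (h : v ∈ N.M), W v = 0 := fun v h => by simp [hW, ext0, h]
      have hlapW : ∀ k (h : k ∉ N.M), N.lap W k = 0 := by
        intro k h
        have := congrFun hker ⟨k, h⟩
        exact this
      have hsum : ∑ k, W k * N.lap W k = 0 := by
        refine Finset.sum_eq_zero fun k _ => ?_
        by_cases h : k ∈ N.M
        · rw [hWM k h, zero_mul]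
        · rw [hlapW k h, mul_zero]
      have hconst := N.const_of_energy_zero W hsum
      funext k
      obtain ⟨v0, hv0⟩ := N.M_nonempty
      have : W k.1 = W v0 := hconst _ _
      rw [hWM v0 hv0] at this
      have : W k.1 = 0 := this
      simpa [hW, ext0, k.2] using this
    exact sub_eq_zero.mp hzero
  have hTsurj : Function.Surjective T := LinearMap.injective_iff_surjective.mp hTinj
  let base : Fin N.n → ℝ := fun v => if v ∈ N.M then x v else 0
  obtain ⟨u, hu⟩ := hTsurj (fun k => - N.lap base k.1)
  refine ⟨base + ext0 u, fun v hv => ?_, fun k hk => ?_⟩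
  · simp [base, ext0, hv]
  · rw [N.lap_add]
    have := congrFun hu ⟨k, hk⟩
    simp only [T, LinearMap.coe_mk, AddHom.coe_mk] at this
    rw [this]; ring

theorem harmonic_response (C : Matrix N.Bdry N.Bdry ℝ) (hC : N.IsElecResponse C)
    (U : Fin N.n → ℝ) (hU : ∀ k, k ∉ N.M → N.lap U k = 0) (v : N.Bdry) :
    N.lap U v.1 = ∑ u : N.Bdry, C v u * U u.1 := by
  have := hC (fun u => U u.1) U (fun k l => N.c k l * (U k - U l))
    (fun k l => rfl) (fun k hk => by simpa [lap, Finset.mul_sum] using hU k hk)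
    (fun _ => rfl) v
  simpa [lap] using this

end Network


namespace Network

variable (N : Network)

/-! ### Ports and roots -/

theorem mem_M_of_mem_A {i : Fin N.p} {v : Fin N.n} (h : v ∈ N.A i) : v ∈ N.M :=
  N.mem_M_iff.mpr ⟨i, h⟩

theorem port_unique {i j : Fin N.p} {v : Fin N.n} (hi : v ∈ N.A i) (hj : v ∈ N.A j) :
    i = j := by
  by_contra hne
  exact (Finset.disjoint_left.mp (N.A_disjoint i j hne) hi) hj

theorem root_eq_max {i : Fin N.p} {v : Fin N.n} (h : v ∈ N.A i) :
    N.root v = (N.A i).max' ⟨v, h⟩ := by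
  have hex : ∃ j, v ∈ N.A j := ⟨i, h⟩
  rw [root, dif_pos hex]
  have : hex.choose = i := N.port_unique hex.choose_spec h
  congr 1 <;> rw [this]

theorem root_mem_A {i : Fin N.p} {v : Fin N.n} (h : v ∈ N.A i) : N.root v ∈ N.A i := by
  rw [N.root_eq_max h]; exact (N.A i).max'_mem _

theorem lastV_mem : N.lastV ∈ N.M := N.M.max'_mem _

theorem root_lastV : N.root N.lastV = N.lastV :=
  N.root_eq_self_of_max N.lastV_mem (fun u hu => N.M.le_max' u hu)

theorem lastV_mem_A_lastPort : N.lastV ∈ N.A N.lastPort := by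
  obtain ⟨i, hi⟩ := N.mem_M_iff.mp N.lastV_mem
  rcases eq_or_ne i N.lastPort with rfl | hne
  · exact hi
  · exfalso
    have hilt : i < N.lastPort :=
      lt_of_le_of_ne (Fin.le_def.mpr (Nat.le_pred_of_lt i.2)) hne
    obtain ⟨v, hv⟩ := N.A_nonempty N.lastPort
    have h1 : N.lastV < v := N.A_ordered i N.lastPort N.lastV v hilt hi hv
    have h2 : v ≤ N.lastV := N.M.le_max' v (N.mem_M_of_mem_A hv)
    exact absurd h1 (not_lt.mpr h2)

/-- The cast from `Fin (p-1)` (non-last ports) into `Fin p`. -/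
def ck (k : Fin (N.p - 1)) : Fin N.p := Fin.castLE (Nat.sub_le N.p 1) k

theorem ck_ne_lastPort (k : Fin (N.p - 1)) : N.ck k ≠ N.lastPort := by
  intro h
  have : (k : ℕ) = N.p - 1 := congrArg Fin.val h
  exact absurd k.2 (by omega)

theorem ck_injective : Function.Injective N.ck := Fin.castLE_injective (Nat.sub_le N.p 1)

/-- The root of a non-last port. -/
noncomputable def rootOf (k : Fin (N.p - 1)) : Fin N.n :=
  (N.A (N.ck k)).max' (N.A_nonempty _)

theorem rootOf_mem (k : Fin (N.p - 1)) : N.rootOf k ∈ N.A (N.ck k) :=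
  (N.A (N.ck k)).max'_mem _

theorem root_rootOf (k : Fin (N.p - 1)) : N.root (N.rootOf k) = N.rootOf k := by
  rw [N.root_eq_max (N.rootOf_mem k)]; rfl

theorem lastV_not_mem_A_ck (k : Fin (N.p - 1)) : N.lastV ∉ N.A (N.ck k) := fun h =>
  N.ck_ne_lastPort k (N.port_unique h N.lastV_mem_A_lastPort)

theorem rootOf_ne_lastV (k : Fin (N.p - 1)) : N.rootOf k ≠ N.lastV := fun h =>
  N.lastV_not_mem_A_ck k (h ▸ N.rootOf_mem k)

/-! ### The index bijection -/

/-- Indicator columns: the non-root unit vectors and the port indicators. -/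
noncomputable def colV : (N.NonRoot ⊕ Fin (N.p - 1)) → Fin N.n → ℝ
  | Sum.inl x => fun v => if v = x.1 then 1 else 0
  | Sum.inr k => fun v => if v ∈ N.A (N.ck k) then 1 else 0

noncomputable def eFun : N.NonRoot ⊕ Fin (N.p - 1) → N.Bdry'
  | Sum.inl x => ⟨x.1, x.2.1, fun h => x.2.2 (by rw [h, N.root_lastV])⟩
  | Sum.inr k => ⟨N.rootOf k, N.mem_M_of_mem_A (N.rootOf_mem k), N.rootOf_ne_lastV k⟩

theorem eFun_bijective : Function.Bijective N.eFun := by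
  constructor
  · rintro (x | k) (x' | k') h
    · have hv : (N.eFun (Sum.inl x)).1 = (N.eFun (Sum.inl x')).1 := congrArg Subtype.val h
      exact congrArg Sum.inl (Subtype.ext hv)
    · exfalso
      have hv : (N.eFun (Sum.inl x)).1 = (N.eFun (Sum.inr k')).1 := congrArg Subtype.val h
      exact x.2.2 (by rw [show x.1 = N.rootOf k' from hv, N.root_rootOf])
    · exfalso
      have hv : (N.eFun (Sum.inr k)).1 = (N.eFun (Sum.inl x')).1 := congrArg Subtype.val h
      exact x'.2.2 (by rw [← show N.rootOf k = x'.1 from hv, N.root_rootOf])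
    · have hv : (N.eFun (Sum.inr k)).1 = (N.eFun (Sum.inr k')).1 := congrArg Subtype.val h
      have : N.ck k = N.ck k' := N.port_unique ((show N.rootOf k = N.rootOf k' from hv) ▸ N.rootOf_mem k) (N.rootOf_mem k')
      exact congrArg Sum.inr (N.ck_injective this)
  · rintro ⟨w, hwM, hwne⟩
    by_cases h : N.root w ≠ w
    · exact ⟨Sum.inl ⟨w, hwM, h⟩, rfl⟩
    · push_neg at h
      obtain ⟨i, hi⟩ := N.mem_M_iff.mp hwM
      have hw : w = (N.A i).max' ⟨w, hi⟩ := by rw [← N.root_eq_max hi, h]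
      have hine : i ≠ N.lastPort := by
        rintro rfl
        apply hwne
        have h1 : (N.A N.lastPort).max' ⟨w, hi⟩ = N.lastV := le_antisymm
          (N.M.le_max' _ (N.mem_M_of_mem_A ((N.A N.lastPort).max'_mem _)))
          ((N.A N.lastPort).le_max' _ N.lastV_mem_A_lastPort)
        rw [hw, h1]
      have hklt : (i : ℕ) < N.p - 1 :=
        lt_of_le_of_ne (Nat.le_pred_of_lt i.2) (fun h => hine (Fin.ext h))
      refine ⟨Sum.inr ⟨(i : ℕ), hklt⟩, ?_⟩
      have hck : N.ck ⟨(i : ℕ), hklt⟩ = i := Fin.ext rfl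
      apply Subtype.ext
      show N.rootOf _ = w
      rw [rootOf]
      rw [hw]
      congr 1 <;> rw [hck]

/-- The bijection between non-roots plus non-last ports and non-last boundary vertices. -/
noncomputable def eEq : (N.NonRoot ⊕ Fin (N.p - 1)) ≃ N.Bdry' :=
  Equiv.ofBijective _ N.eFun_bijective

theorem eEq_apply (s : N.NonRoot ⊕ Fin (N.p - 1)) : N.eEq s = N.eFun s := rfl

theorem colV_lastV (s : N.NonRoot ⊕ Fin (N.p - 1)) : N.colV s N.lastV = 0 := by
  cases s with
  | inl x =>
    have : N.lastV ≠ x.1 := fun h => x.2.2 (by rw [← h, N.root_lastV])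
    simp [colV, this]
  | inr k => simp [colV, N.lastV_not_mem_A_ck k]

theorem colV_le {s : N.NonRoot ⊕ Fin (N.p - 1)} {v : Fin N.n}
    (h : N.colV s v ≠ 0) : v ≤ (N.eFun s).1 := by
  cases s with
  | inl x =>
    have : v = x.1 := by by_contra hne; simp [colV, hne] at h
    exact le_of_eq this
  | inr k =>
    have : v ∈ N.A (N.ck k) := by by_contra hne; simp [colV, hne] at h
    exact (N.A (N.ck k)).le_max' v this

theorem colV_diag (s : N.NonRoot ⊕ Fin (N.p - 1)) : N.colV s (N.eFun s).1 = 1 := by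
  cases s with
  | inl x => simp [colV, eFun]
  | inr k => simp [colV, eFun, N.rootOf_mem k]

/-! ### Summation helpers -/

theorem sum_bdry_collapse (x : Fin N.n) (hx : x ∈ N.M) (f : N.Bdry → ℝ) :
    ∑ u : N.Bdry, (if u.1 = x then 1 else 0) * f u = f ⟨x, hx⟩ := by
  rw [Finset.sum_eq_single (⟨x, hx⟩ : N.Bdry)]
  · simp
  · intro u _ hne
    have : u.1 ≠ x := fun h => hne (Subtype.ext h)
    simp [this]
  · intro h; exact absurd (Finset.mem_univ _) h

theorem sum_bdry_split (f : N.Bdry → ℝ) (h0 : f ⟨N.lastV, N.lastV_mem⟩ = 0) :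
    ∑ u : N.Bdry, f u = ∑ w : N.Bdry', f ⟨w.1, w.2.1⟩ := by
  classical
  rw [← Finset.sum_erase_add Finset.univ f (Finset.mem_univ ⟨N.lastV, N.lastV_mem⟩), h0,
    add_zero]
  refine Finset.sum_bij (fun u hu => (⟨u.1, u.2, ?_⟩ : N.Bdry')) ?_ ?_ ?_ ?_
  · intro h
    rw [Finset.mem_erase] at hu
    exact hu.1 (Subtype.ext h)
  · intro u hu; exact Finset.mem_univ _
  · intro u hu u' hu' h
    simp only [Subtype.mk.injEq] at h
    exact Subtype.ext h
  · intro w _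
    refine ⟨⟨w.1, w.2.1⟩, Finset.mem_erase.mpr ⟨fun h => w.2.2 (by
      have : (⟨N.lastV, N.lastV_mem⟩ : N.Bdry).1 = N.lastV := rfl
      exact (congrArg Subtype.val h).trans this), Finset.mem_univ _⟩, rfl⟩
  · intro u hu; rfl

/-- The prescribed-voltage part of the boundary data. -/
noncomputable def dP (Δ : N.NonRoot → ℝ) (u : N.Bdry) : ℝ :=
  if h : N.root u.1 ≠ u.1 then Δ ⟨u.1, u.2, h⟩ else 0

theorem sum_nonroot (f : N.Bdry → ℝ) (Δ : N.NonRoot → ℝ) :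
    ∑ u : N.Bdry, f u * N.dP Δ u = ∑ z : N.NonRoot, f ⟨z.1, z.2.1⟩ * Δ z := by
  classical
  rw [← Finset.sum_filter_add_sum_filter_not Finset.univ
    (fun u : N.Bdry => N.root u.1 ≠ u.1)]
  have h2 : ∑ u ∈ Finset.univ.filter (fun u : N.Bdry => ¬ N.root u.1 ≠ u.1),
      f u * N.dP Δ u = 0 := by
    refine Finset.sum_eq_zero fun u hu => ?_
    rw [Finset.mem_filter] at hu
    rw [dP, dif_neg hu.2, mul_zero]
  rw [h2, add_zero]
  refine Finset.sum_bij (fun u hu => (⟨u.1, u.2, ?_⟩ : N.NonRoot)) ?_ ?_ ?_ ?_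
  · exact (Finset.mem_filter.mp hu).2
  · intro u hu; exact Finset.mem_univ _
  · intro u hu u' hu' h
    simp only [Subtype.mk.injEq] at h
    exact Subtype.ext h
  · intro z _
    refine ⟨⟨z.1, z.2.1⟩, Finset.mem_filter.mpr ⟨Finset.mem_univ _, z.2.2⟩, rfl⟩
  · intro u hu
    rw [dP, dif_pos (Finset.mem_filter.mp hu).2]

end Network


namespace Network

variable (N : Network)

/-! ### The compressed matrices -/

theorem sum_bdry (g : Fin N.n → ℝ) : ∑ u : N.Bdry, g u.1 = ∑ v ∈ N.M, g v :=
  (Finset.sum_subtype N.M (fun _ => Iff.rfl) g).symm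

theorem sum_mul_sum_swap {α β : Type*} [Fintype α] [Fintype β]
    (a : β → α → ℝ) (y : β → ℝ) (g : α → ℝ) :
    ∑ u : α, (∑ k : β, a k u * y k) * g u = ∑ k : β, (∑ u : α, a k u * g u) * y k := by
  simp only [Finset.sum_mul]
  rw [Finset.sum_comm]
  exact Finset.sum_congr rfl fun k _ => Finset.sum_congr rfl fun u _ => by ring

/-- The big compressed matrix `Gᵀ C G`. -/
noncomputable def Tmat (C : Matrix N.Bdry N.Bdry ℝ) :
    Matrix (N.NonRoot ⊕ Fin (N.p - 1)) (N.NonRoot ⊕ Fin (N.p - 1)) ℝ :=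
  fun s s' => ∑ u : N.Bdry, ∑ v : N.Bdry, N.colV s u.1 * C u v * N.colV s' v.1

noncomputable def T11 (C : Matrix N.Bdry N.Bdry ℝ) : Matrix N.NonRoot N.NonRoot ℝ :=
  fun x z => C ⟨x.1, x.2.1⟩ ⟨z.1, z.2.1⟩

noncomputable def T12 (C : Matrix N.Bdry N.Bdry ℝ) : Matrix N.NonRoot (Fin (N.p - 1)) ℝ :=
  fun x k => ∑ v : N.Bdry, C ⟨x.1, x.2.1⟩ v * N.colV (Sum.inr k) v.1

noncomputable def T21 (C : Matrix N.Bdry N.Bdry ℝ) : Matrix (Fin (N.p - 1)) N.NonRoot ℝ :=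
  fun k z => ∑ u : N.Bdry, N.colV (Sum.inr k) u.1 * C u ⟨z.1, z.2.1⟩

noncomputable def Bmat (C : Matrix N.Bdry N.Bdry ℝ) :
    Matrix (Fin (N.p - 1)) (Fin (N.p - 1)) ℝ :=
  fun k k' => N.Tmat C (Sum.inr k) (Sum.inr k')

theorem Tmat_eq (C : Matrix N.Bdry N.Bdry ℝ) :
    N.Tmat C = Matrix.fromBlocks (N.T11 C) (N.T12 C) (N.T21 C) (N.Bmat C) := by
  have collapse_left : ∀ (x : N.NonRoot) (f : N.Bdry → ℝ),
      ∑ u : N.Bdry, (if u.1 = x.1 then (1:ℝ) else 0) * f u = f ⟨x.1, x.2.1⟩ :=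
    fun x f => N.sum_bdry_collapse x.1 x.2.1 f
  ext s s'
  cases s with
  | inl x =>
    cases s' with
    | inl z =>
      show (∑ u : N.Bdry, ∑ v : N.Bdry, N.colV (Sum.inl x) u.1 * C u v
          * N.colV (Sum.inl z) v.1) = N.T11 C x z
      have h1 : ∀ u : N.Bdry, ∑ v : N.Bdry, N.colV (Sum.inl x) u.1 * C u v
          * N.colV (Sum.inl z) v.1
          = (if u.1 = x.1 then (1:ℝ) else 0)
            * ∑ v : N.Bdry, (if v.1 = z.1 then (1:ℝ) else 0) * C u v := by
        intro u
        rw [Finset.mul_sum]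
        exact Finset.sum_congr rfl fun v _ => by simp only [colV]; ring
      rw [Finset.sum_congr rfl fun u _ => h1 u]
      have h2 : ∀ u : N.Bdry, (if u.1 = x.1 then (1:ℝ) else 0)
          * ∑ v : N.Bdry, (if v.1 = z.1 then (1:ℝ) else 0) * C u v
          = (if u.1 = x.1 then (1:ℝ) else 0) * C u ⟨z.1, z.2.1⟩ := by
        intro u
        rw [N.sum_bdry_collapse z.1 z.2.1 (fun v => C u v)]
      rw [Finset.sum_congr rfl fun u _ => h2 u, collapse_left x (fun u => C u ⟨z.1, z.2.1⟩)]
      rfl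
    | inr k =>
      show (∑ u : N.Bdry, ∑ v : N.Bdry, N.colV (Sum.inl x) u.1 * C u v
          * N.colV (Sum.inr k) v.1) = N.T12 C x k
      have h1 : ∀ u : N.Bdry, ∑ v : N.Bdry, N.colV (Sum.inl x) u.1 * C u v
          * N.colV (Sum.inr k) v.1
          = (if u.1 = x.1 then (1:ℝ) else 0)
            * ∑ v : N.Bdry, C u v * N.colV (Sum.inr k) v.1 := by
        intro u
        rw [Finset.mul_sum]
        exact Finset.sum_congr rfl fun v _ => by simp only [colV]; ring
      rw [Finset.sum_congr rfl fun u _ => h1 u,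
        collapse_left x (fun u => ∑ v : N.Bdry, C u v * N.colV (Sum.inr k) v.1)]
      rfl
  | inr k =>
    cases s' with
    | inl z =>
      show (∑ u : N.Bdry, ∑ v : N.Bdry, N.colV (Sum.inr k) u.1 * C u v
          * N.colV (Sum.inl z) v.1) = N.T21 C k z
      refine Finset.sum_congr rfl fun u _ => ?_
      have h1 : ∑ v : N.Bdry, N.colV (Sum.inr k) u.1 * C u v * N.colV (Sum.inl z) v.1
          = N.colV (Sum.inr k) u.1
            * ∑ v : N.Bdry, (if v.1 = z.1 then (1:ℝ) else 0) * C u v := by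
        rw [Finset.mul_sum]
        exact Finset.sum_congr rfl fun v _ => by simp only [colV]; ring
      rw [h1, N.sum_bdry_collapse z.1 z.2.1 (fun v => C u v)]
    | inr k' => rfl

/-! ### `det Tmat = det C̃` -/

noncomputable def Qmat : Matrix N.Bdry' N.Bdry' ℝ :=
  fun w w' => N.colV (N.eEq.symm w') w.1

theorem Qmat_det : (N.Qmat).det = 1 := by
  have htri : N.Qmat.BlockTriangular id := by
    intro w w' hlt
    by_contra h0
    have hle : w.1 ≤ (N.eFun (N.eEq.symm w')).1 := N.colV_le h0
    have heq : N.eFun (N.eEq.symm w') = w' := N.eEq.apply_symm_apply w'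
    rw [heq] at hle
    have hlt' : (w' : N.Bdry') < w := hlt
    exact absurd hle (not_le.mpr (Subtype.coe_lt_coe.mpr hlt'))
  rw [Matrix.det_of_upperTriangular htri]
  refine Finset.prod_eq_one fun w _ => ?_
  have h := N.colV_diag (N.eEq.symm w)
  rw [show N.eFun (N.eEq.symm w) = w from N.eEq.apply_symm_apply w] at h
  exact h

theorem det_Tmat (C : Matrix N.Bdry N.Bdry ℝ) : (N.Tmat C).det = (N.Ctilde C).det := by
  have key : N.Tmat C
      = ((N.Qmat.transpose * N.Ctilde C * N.Qmat).submatrix N.eEq N.eEq) := by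
    ext s s'
    show (∑ u : N.Bdry, ∑ v : N.Bdry, N.colV s u.1 * C u v * N.colV s' v.1)
      = (N.Qmat.transpose * N.Ctilde C * N.Qmat) (N.eEq s) (N.eEq s')
    have h1 : ∀ u : N.Bdry, ∑ v : N.Bdry, N.colV s u.1 * C u v * N.colV s' v.1
        = ∑ w' : N.Bdry', N.colV s u.1 * C u ⟨w'.1, w'.2.1⟩ * N.colV s' w'.1 :=
      fun u => N.sum_bdry_split (fun v => N.colV s u.1 * C u v * N.colV s' v.1)
        (show N.colV s u.1 * C u ⟨N.lastV, N.lastV_mem⟩ * N.colV s' N.lastV = 0 by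
          rw [N.colV_lastV s', mul_zero])
    rw [Finset.sum_congr rfl fun u _ => h1 u]
    rw [N.sum_bdry_split
      (fun u => ∑ w' : N.Bdry', N.colV s u.1 * C u ⟨w'.1, w'.2.1⟩ * N.colV s' w'.1)
      (show (∑ w' : N.Bdry', N.colV s N.lastV * C ⟨N.lastV, N.lastV_mem⟩ ⟨w'.1, w'.2.1⟩
          * N.colV s' w'.1) = 0 from Finset.sum_eq_zero fun w' _ => by
        rw [N.colV_lastV s]; ring)]
    simp only [Matrix.mul_apply, Matrix.transpose_apply, Qmat, Ctilde,
      Equiv.symm_apply_apply, Finset.sum_mul]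
    rw [Finset.sum_comm]
  rw [key, Matrix.det_submatrix_equiv_self, Matrix.det_mul, Matrix.det_mul,
    Matrix.det_transpose, N.Qmat_det, one_mul, mul_one]

/-! ### The quadratic form and invertibility of `Bmat` -/

theorem quad_zero (C : Matrix N.Bdry N.Bdry ℝ) (hC : N.IsElecResponse C)
    (x : N.Bdry → ℝ)
    (h : ∑ v : N.Bdry, x v * ∑ u : N.Bdry, C v u * x u = 0) :
    ∀ v u : N.Bdry, x v = x u := by
  obtain ⟨U, hUb, hUh⟩ := N.exists_harmonic
    (fun v => if h : v ∈ N.M then x ⟨v, h⟩ else 0)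
  have hUx : ∀ v : N.Bdry, U v.1 = x v := fun v => by
    rw [hUb v.1 v.2, dif_pos v.2]
  have hresp : ∀ v : N.Bdry, N.lap U v.1 = ∑ u, C v u * x u := by
    intro v; rw [N.harmonic_response C hC U hUh v]
    exact Finset.sum_congr rfl fun u _ => by rw [hUx u]
  have hsum : ∑ k, U k * N.lap U k = 0 := by
    have h1 : ∑ k, U k * N.lap U k = ∑ k ∈ N.M, U k * N.lap U k :=
      (Finset.sum_subset (Finset.subset_univ _)
        (fun k _ hk => by rw [hUh k hk, mul_zero])).symm
    have h2 : ∑ k ∈ N.M, U k * N.lap U k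
        = ∑ v : N.Bdry, U v.1 * N.lap U v.1 := (N.sum_bdry _).symm
    rw [h1, h2, ← h]
    exact Finset.sum_congr rfl fun v _ => by rw [hUx v, hresp v]
  have hconst := N.const_of_energy_zero U hsum
  intro v u
  rw [← hUx v, ← hUx u]
  exact hconst _ _

theorem det_Bmat_ne_zero (C : Matrix N.Bdry N.Bdry ℝ) (hC : N.IsElecResponse C) :
    (N.Bmat C).det ≠ 0 := by
  intro hdet
  obtain ⟨y, hy0, hy⟩ := Matrix.exists_mulVec_eq_zero_iff.mpr hdet
  set x : N.Bdry → ℝ := fun u => ∑ k, N.colV (Sum.inr k) u.1 * y k with hxdef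
  have hW : ∀ v : N.Bdry, (∑ u : N.Bdry, C v u * x u)
      = ∑ k, (∑ u : N.Bdry, N.colV (Sum.inr k) u.1 * C v u) * y k := by
    intro v
    rw [show (∑ u : N.Bdry, C v u * x u) = ∑ u : N.Bdry, x u * C v u from
      Finset.sum_congr rfl fun u _ => mul_comm _ _]
    exact sum_mul_sum_swap _ _ _
  have hBB : ∀ k k', (∑ v : N.Bdry, (∑ u : N.Bdry, N.colV (Sum.inr k') u.1 * C v u)
      * N.colV (Sum.inr k) v.1) = N.Bmat C k k' := by
    intro k k'
    show _ = ∑ u : N.Bdry, ∑ v : N.Bdry, N.colV (Sum.inr k) u.1 * C u v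
      * N.colV (Sum.inr k') v.1
    simp only [Finset.sum_mul]
    exact Finset.sum_congr rfl fun v _ => Finset.sum_congr rfl fun u _ => by ring
  have hquad : ∑ v : N.Bdry, x v * ∑ u : N.Bdry, C v u * x u = 0 := by
    have step1 : (∑ v : N.Bdry, x v * ∑ u : N.Bdry, C v u * x u)
        = ∑ k, (∑ v : N.Bdry, (∑ u : N.Bdry, C v u * x u) * N.colV (Sum.inr k) v.1) * y k := by
      rw [show (∑ v : N.Bdry, x v * ∑ u : N.Bdry, C v u * x u)
          = ∑ v : N.Bdry, (∑ k, N.colV (Sum.inr k) v.1 * y k)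
            * (∑ u : N.Bdry, C v u * x u) from rfl]
      rw [sum_mul_sum_swap (fun (k : Fin (N.p - 1)) (v : N.Bdry) => N.colV (Sum.inr k) v.1) y]
      refine Finset.sum_congr rfl fun k _ => ?_
      congr 1
      exact Finset.sum_congr rfl fun v _ => mul_comm _ _
    rw [step1]
    refine Finset.sum_eq_zero fun k _ => ?_
    have step2 : (∑ v : N.Bdry, (∑ u : N.Bdry, C v u * x u) * N.colV (Sum.inr k) v.1)
        = ∑ k', N.Bmat C k k' * y k' := by
      rw [Finset.sum_congr rfl fun v _ => by rw [hW v]]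
      rw [sum_mul_sum_swap (fun (k' : Fin (N.p - 1)) (v : N.Bdry) => ∑ u : N.Bdry,
        N.colV (Sum.inr k') u.1 * C v u) y (fun v => N.colV (Sum.inr k) v.1)]
      exact Finset.sum_congr rfl fun k' _ => by rw [hBB k k', mul_comm]
    have step3 : (∑ k', N.Bmat C k k' * y k') = 0 := congrFun hy k
    rw [step2, step3, zero_mul]
  have hconst := N.quad_zero C hC x hquad
  have hx0 : x ⟨N.lastV, N.lastV_mem⟩ = 0 := by
    refine Finset.sum_eq_zero fun k _ => ?_
    rw [show N.colV (Sum.inr k) (N.lastV) = 0 from N.colV_lastV (Sum.inr k), zero_mul]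
  apply hy0
  funext k
  obtain ⟨u0, hu0⟩ := N.A_nonempty (N.ck k)
  have hxy : x ⟨u0, N.mem_M_of_mem_A hu0⟩ = y k := by
    show (∑ k', N.colV (Sum.inr k') u0 * y k') = y k
    rw [Finset.sum_eq_single k]
    · simp [colV, hu0]
    · intro k' _ hk'
      have : u0 ∉ N.A (N.ck k') := fun hmem =>
        hk' (N.ck_injective (N.port_unique hmem hu0))
      simp [colV, this]
    · intro h; exact absurd (Finset.mem_univ _) h
  have := hconst ⟨u0, N.mem_M_of_mem_A hu0⟩ ⟨N.lastV, N.lastV_mem⟩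
  rw [hxy, hx0] at this
  exact this

end Network


namespace Network

variable (N : Network)

/-! ### Multilinearity: `validMinorSum = det Bmat` -/

theorem det_rows_sum {q : ℕ} {β : Type*} [DecidableEq β] (S : Fin q → Finset β)
    (r : β → Fin q → ℝ) :
    Matrix.det (Matrix.of fun k k' => ∑ u ∈ S k, r u k')
      = ∑ ι ∈ Fintype.piFinset S, Matrix.det (Matrix.of fun k k' => r (ι k) k') := by
  have h := (Matrix.detRowAlternating (n := Fin q) (R := ℝ)).toMultilinearMap.map_sum_finset
    (fun (_ : Fin q) (u : β) => r u) S
  have h2 : (Matrix.of fun k k' => ∑ u ∈ S k, r u k')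
      = fun k => ∑ u ∈ S k, r u := by
    funext k k'
    simp
  rw [show Matrix.det (Matrix.of fun k k' => ∑ u ∈ S k, r u k')
    = Matrix.detRowAlternating (Matrix.of fun k k' => ∑ u ∈ S k, r u k') from rfl, h2]
  exact h

theorem det_double_sum {q : ℕ} {β : Type*} [DecidableEq β] (S : Fin q → Finset β)
    (Cf : β → β → ℝ) :
    Matrix.det (Matrix.of fun k k' => ∑ u ∈ S k, ∑ v ∈ S k', Cf u v)
      = ∑ ι ∈ Fintype.piFinset S, ∑ κ ∈ Fintype.piFinset S,
          Matrix.det (Matrix.of fun k k' => Cf (ι k) (κ k')) := by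
  rw [det_rows_sum S (fun u => fun k' => ∑ v ∈ S k', Cf u v)]
  refine Finset.sum_congr rfl fun ι _ => ?_
  rw [← Matrix.det_transpose]
  have htr : (Matrix.of fun k k' => ∑ v ∈ S k', Cf (ι k) v).transpose
      = Matrix.of fun k k' => ∑ v ∈ S k, Cf (ι k') v := by
    ext k k'; rfl
  rw [htr, det_rows_sum S (fun v => fun k' => Cf (ι k') v)]
  refine Finset.sum_congr rfl fun κ _ => ?_
  conv_rhs => rw [← Matrix.det_transpose]
  congr 1

theorem validMinorSum_eq (C : Matrix N.Bdry N.Bdry ℝ) :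
    N.validMinorSum C = (N.Bmat C).det := by
  have hfil : (Finset.univ.filter (fun ι : Fin (N.p - 1) → N.Bdry =>
      ∀ k, (ι k).1 ∈ N.A (Fin.castLE (Nat.sub_le N.p 1) k)))
      = Fintype.piFinset (fun k => Finset.univ.filter
          (fun u : N.Bdry => u.1 ∈ N.A (N.ck k))) := by
    ext ι
    simp only [Finset.mem_filter, Fintype.mem_piFinset, Finset.mem_univ, true_and, ck]
    exact ⟨fun h k => Finset.mem_filter.mpr ⟨Finset.mem_univ _, h k⟩,
      fun h k => (Finset.mem_filter.mp (h k)).2⟩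
  have hB : N.Bmat C = Matrix.of fun k k' =>
      ∑ u ∈ Finset.univ.filter (fun u : N.Bdry => u.1 ∈ N.A (N.ck k)),
        ∑ v ∈ Finset.univ.filter (fun v : N.Bdry => v.1 ∈ N.A (N.ck k')), C u v := by
    ext k k'
    show (∑ u : N.Bdry, ∑ v : N.Bdry, N.colV (Sum.inr k) u.1 * C u v
      * N.colV (Sum.inr k') v.1) = _
    show _ = ∑ u ∈ Finset.univ.filter (fun u : N.Bdry => u.1 ∈ N.A (N.ck k)),
        ∑ v ∈ Finset.univ.filter (fun v : N.Bdry => v.1 ∈ N.A (N.ck k')), C u v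
    rw [Finset.sum_filter]
    refine Finset.sum_congr rfl fun u _ => ?_
    rw [Finset.sum_filter]
    by_cases hu : u.1 ∈ N.A (N.ck k)
    · rw [if_pos hu]
      refine Finset.sum_congr rfl fun v _ => ?_
      by_cases hv : v.1 ∈ N.A (N.ck k')
      · rw [if_pos hv]; simp [colV, hu, hv]
      · rw [if_neg hv]; simp [colV, hv]
    · rw [if_neg hu]
      refine Finset.sum_eq_zero fun v _ => ?_
      simp [colV, hu]
  rw [validMinorSum, hfil, hB]
  exact (det_double_sum (fun k => Finset.univ.filter (fun u : N.Bdry => u.1 ∈ N.A (N.ck k)))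
    (fun u v => C u v)).symm

/-! ### Identification of the response matrix -/

theorem root_idem {v : Fin N.n} (hv : v ∈ N.M) : N.root (N.root v) = N.root v := by
  obtain ⟨i, hi⟩ := N.mem_M_iff.mp hv
  have h2 : (N.A i).max' ⟨v, hi⟩ ∈ N.A i := (N.A i).max'_mem _
  rw [N.root_eq_max hi, N.root_eq_max h2]

theorem mem_A_iff_root {v : Fin N.n} (hv : v ∈ N.M) (j : Fin N.p) :
    v ∈ N.A j ↔ N.root v ∈ N.A j := by
  obtain ⟨i, hi⟩ := N.mem_M_iff.mp hv
  constructor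
  · intro h
    have hji : j = i := N.port_unique h hi
    subst hji
    exact N.root_mem_A hi
  · intro h
    have hji : j = i := N.port_unique h (N.root_mem_A hi)
    subst hji
    exact hi

set_option maxHeartbeats 1000000 in
theorem L_eq (C : Matrix N.Bdry N.Bdry ℝ) (hC : N.IsElecResponse C)
    (L : Matrix N.NonRoot N.NonRoot ℝ) (hL : N.IsResponse L) :
    L = N.T11 C - N.T12 C * (N.Bmat C)⁻¹ * N.T21 C := by
  have hdet : IsUnit (N.Bmat C).det :=
    isUnit_iff_ne_zero.mpr (N.det_Bmat_ne_zero C hC)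
  have main : ∀ Δ : N.NonRoot → ℝ, L.mulVec Δ = (N.T11 C).mulVec Δ
      - (N.T12 C).mulVec ((N.Bmat C)⁻¹.mulVec ((N.T21 C).mulVec Δ)) := by
    intro Δ
    set yv : Fin (N.p - 1) → ℝ := -((N.Bmat C)⁻¹.mulVec ((N.T21 C).mulVec Δ)) with hyv
    have hyB : (N.Bmat C).mulVec yv = -((N.T21 C).mulVec Δ) := by
      rw [hyv, Matrix.mulVec_neg, Matrix.mulVec_mulVec,
        Matrix.mul_nonsing_inv _ hdet, Matrix.one_mulVec]
    set xb : N.Bdry → ℝ := fun u => N.dP Δ u + ∑ k, N.colV (Sum.inr k) u.1 * yv k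
      with hxb
    obtain ⟨U, hUb, hUh⟩ := N.exists_harmonic
      (fun v => if h : v ∈ N.M then xb ⟨v, h⟩ else 0)
    have hUx : ∀ v : N.Bdry, U v.1 = xb v := fun v => by
      rw [hUb v.1 v.2, dif_pos v.2]
    have hresp : ∀ v : N.Bdry, N.lap U v.1 = ∑ u, C v u * xb u := by
      intro v; rw [N.harmonic_response C hC U hUh v]
      exact Finset.sum_congr rfl fun u _ => by rw [hUx u]
    have haveA : ∀ v : N.Bdry, (∑ u, C v u * N.dP Δ u)
        = ∑ z : N.NonRoot, C v ⟨z.1, z.2.1⟩ * Δ z :=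
      fun v => N.sum_nonroot (fun u => C v u) Δ
    have haveB : ∀ v : N.Bdry, (∑ u, C v u * (∑ k, N.colV (Sum.inr k) u.1 * yv k))
        = ∑ k, (∑ u, N.colV (Sum.inr k) u.1 * C v u) * yv k := by
      intro v
      rw [show (∑ u : N.Bdry, C v u * (∑ k, N.colV (Sum.inr k) u.1 * yv k))
          = ∑ u : N.Bdry, (∑ k, N.colV (Sum.inr k) u.1 * yv k) * C v u from
        Finset.sum_congr rfl fun u _ => mul_comm _ _]
      exact sum_mul_sum_swap _ _ _
    have havexb : ∀ v : N.Bdry, (∑ u, C v u * xb u)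
        = (∑ z : N.NonRoot, C v ⟨z.1, z.2.1⟩ * Δ z)
          + ∑ k, (∑ u, N.colV (Sum.inr k) u.1 * C v u) * yv k := by
      intro v
      rw [← haveA v, ← haveB v, ← Finset.sum_add_distrib]
      refine Finset.sum_congr rfl fun u _ => ?_
      simp only [hxb]
      ring
    set Iu : Fin N.n → Fin N.n → ℝ := fun k l => N.c k l * (U k - U l) with hIu
    have hIsum : ∀ k, (∑ l, Iu k l) = N.lap U k := fun k => rfl
    set ΔUf : Fin N.n → ℝ := fun v => if h : v ∈ N.M then
      (if h2 : N.root v ≠ v then Δ ⟨v, h, h2⟩ else 0) else 0 with hΔUf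
    have hax : N.Axioms ΔUf U Iu := by
      refine ⟨fun k l => rfl, ?_, ?_, ?_⟩
      · intro k hk; rw [hIsum]; exact hUh k hk
      · intro i hi
        have hval : (i : ℕ) < N.p - 1 :=
          lt_of_le_of_ne (Nat.le_pred_of_lt i.2) (fun h => hi (Fin.ext h))
        set k0 : Fin (N.p - 1) := ⟨i.1, hval⟩ with hk0
        have hck : N.ck k0 = i := Fin.ext rfl
        have hstep : ∑ u : N.Bdry, N.colV (Sum.inr k0) u.1 * N.lap U u.1
            = ∑ k ∈ N.A i, ∑ l, Iu k l := by
          rw [N.sum_bdry (fun v => N.colV (Sum.inr k0) v * N.lap U v)]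
          rw [Finset.sum_congr rfl (fun v hv =>
            show N.colV (Sum.inr k0) v * N.lap U v
              = if v ∈ N.A i then N.lap U v else 0 by
            by_cases hmem : v ∈ N.A i
            · rw [if_pos hmem]; simp [colV, hck, hmem]
            · rw [if_neg hmem]; simp [colV, hck, hmem])]
          rw [← Finset.sum_filter]
          have hfil : N.M.filter (fun v => v ∈ N.A i) = N.A i := by
            ext v
            simp only [Finset.mem_filter]
            exact ⟨fun h => h.2, fun h => ⟨N.mem_M_of_mem_A h, h⟩⟩
          rw [hfil]
          exact Finset.sum_congr rfl fun k _ => (hIsum k).symm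
        rw [← hstep]
        rw [Finset.sum_congr rfl (fun u (_ : u ∈ Finset.univ) => by rw [hresp u, havexb u])]
        simp only [mul_add]
        rw [Finset.sum_add_distrib]
        have hterm1 : ∑ u : N.Bdry, N.colV (Sum.inr k0) u.1
            * (∑ z : N.NonRoot, C u ⟨z.1, z.2.1⟩ * Δ z) = ((N.T21 C).mulVec Δ) k0 := by
          rw [Finset.sum_congr rfl (fun u (_ : u ∈ Finset.univ) => mul_comm _ _)]
          rw [sum_mul_sum_swap (fun (z : N.NonRoot) (u : N.Bdry) => C u ⟨z.1, z.2.1⟩) Δ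
            (fun u => N.colV (Sum.inr k0) u.1)]
          refine Finset.sum_congr rfl fun z _ => ?_
          congr 1
          exact Finset.sum_congr rfl fun u _ => mul_comm _ _
        have hterm2 : ∑ u : N.Bdry, N.colV (Sum.inr k0) u.1
            * (∑ k, (∑ u', N.colV (Sum.inr k) u'.1 * C u u') * yv k)
            = ((N.Bmat C).mulVec yv) k0 := by
          rw [Finset.sum_congr rfl (fun u (_ : u ∈ Finset.univ) => mul_comm _ _)]
          rw [sum_mul_sum_swap (fun (k : Fin (N.p - 1)) (u : N.Bdry) =>
            ∑ u' : N.Bdry, N.colV (Sum.inr k) u'.1 * C u u') yv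
            (fun u => N.colV (Sum.inr k0) u.1)]
          refine Finset.sum_congr rfl fun k _ => ?_
          congr 1
          show (∑ u : N.Bdry, (∑ u' : N.Bdry, N.colV (Sum.inr k) u'.1 * C u u')
            * N.colV (Sum.inr k0) u.1)
            = ∑ u : N.Bdry, ∑ v : N.Bdry, N.colV (Sum.inr k0) u.1 * C u v
              * N.colV (Sum.inr k) v.1
          simp only [Finset.sum_mul]
          exact Finset.sum_congr rfl fun u _ =>
            Finset.sum_congr rfl fun u' _ => by ring
        rw [hterm1, hterm2, hyB]
        simp
      · intro k hk hr
        have hrM : N.root k ∈ N.M := N.root_mem hk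
        have hU1 : U k = xb ⟨k, hk⟩ := hUx ⟨k, hk⟩
        have hU2 : U (N.root k) = xb ⟨N.root k, hrM⟩ := hUx ⟨N.root k, hrM⟩
        have hdP1 : N.dP Δ ⟨k, hk⟩ = Δ ⟨k, hk, hr⟩ := dif_pos hr
        have hdP2 : N.dP Δ ⟨N.root k, hrM⟩ = 0 := by
          rw [dP, dif_neg]
          push_neg
          exact N.root_idem hk
        have hS : (∑ k' : Fin (N.p - 1), N.colV (Sum.inr k') k * yv k')
            = ∑ k' : Fin (N.p - 1), N.colV (Sum.inr k') (N.root k) * yv k' := by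
          refine Finset.sum_congr rfl fun k' _ => ?_
          congr 1
          show (if k ∈ N.A (N.ck k') then (1:ℝ) else 0)
            = if N.root k ∈ N.A (N.ck k') then 1 else 0
          by_cases hmem : k ∈ N.A (N.ck k')
          · rw [if_pos hmem, if_pos ((N.mem_A_iff_root hk _).mp hmem)]
          · rw [if_neg hmem, if_neg (fun h => hmem ((N.mem_A_iff_root hk _).mpr h))]
        rw [hU1, hU2]
        show (N.dP Δ ⟨k, hk⟩ + ∑ k', N.colV (Sum.inr k') k * yv k')
          - (N.dP Δ ⟨N.root k, hrM⟩ + ∑ k', N.colV (Sum.inr k') (N.root k) * yv k')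
          = ΔUf k
        rw [hdP1, hdP2, hS, hΔUf]
        simp only [dif_pos hk, dif_pos hr]
        ring
    have hLx := hL ΔUf U Iu hax
    funext x
    have hRHS : (∑ y : N.NonRoot, L x y * ΔUf y.1) = L.mulVec Δ x := by
      refine Finset.sum_congr rfl fun y _ => ?_
      congr 1
      show ΔUf y.1 = Δ y
      rw [hΔUf]
      simp only [dif_pos y.2.1, dif_pos y.2.2]
    have hLHS : (∑ l, Iu x.1 l) = (N.T11 C).mulVec Δ x + ((N.T12 C).mulVec yv) x := by
      rw [hIsum, hresp ⟨x.1, x.2.1⟩, havexb ⟨x.1, x.2.1⟩]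
      have h1 : (N.T11 C).mulVec Δ x
          = ∑ z : N.NonRoot, C ⟨x.1, x.2.1⟩ ⟨z.1, z.2.1⟩ * Δ z := by
        simp [Matrix.mulVec, dotProduct, T11]
      have h2 : ((N.T12 C).mulVec yv) x
          = ∑ k, (∑ u, N.colV (Sum.inr k) u.1 * C ⟨x.1, x.2.1⟩ u) * yv k := by
        simp only [Matrix.mulVec, dotProduct, T12]
        refine Finset.sum_congr rfl fun k _ => ?_
        congr 1
        exact Finset.sum_congr rfl fun u _ => mul_comm _ _
      rw [h1, h2]
    have := (hLx x).symm.trans hLHS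
    rw [hRHS] at this
    rw [this, hyv, Matrix.mulVec_neg]
    simp [sub_eq_add_neg]
  have main' : ∀ Δ : N.NonRoot → ℝ, L.mulVec Δ
      = (N.T11 C - N.T12 C * (N.Bmat C)⁻¹ * N.T21 C).mulVec Δ := by
    intro Δ
    rw [main Δ, Matrix.mulVec_mulVec, Matrix.mulVec_mulVec, ← Matrix.sub_mulVec,
      Matrix.mul_assoc]
  ext x z
  have h := congrFun (main' (Pi.single z 1)) x
  simpa [Matrix.mulVec_single] using h

end Network

/-- **Lemma 8.3**: `det L = det C̃ / Σ_{I,J valid} det C_I^J`, where the sum is over all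
pairs of valid sets of rows and columns. -/
theorem det_response_eq_det_Ctilde_div_validMinorSum (N : Network) (hmp : N.p < N.m)
    (L : Matrix N.NonRoot N.NonRoot ℝ) (hL : N.IsResponse L)
    (C : Matrix N.Bdry N.Bdry ℝ) (hC : N.IsElecResponse C) :
    N.validMinorSum C ≠ 0 ∧
    L.det * N.validMinorSum C = (N.Ctilde C).det := by
  have hdetB := N.det_Bmat_ne_zero C hC
  have hvm := N.validMinorSum_eq C
  have hU : IsUnit (N.Bmat C).det := isUnit_iff_ne_zero.mpr hdetB
  have : Invertible (N.Bmat C) := (N.Bmat C).invertibleOfIsUnitDet hU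
  refine ⟨by rw [hvm]; exact hdetB, ?_⟩
  have hfb := Matrix.det_fromBlocks₂₂ (N.T11 C) (N.T12 C) (N.T21 C) (N.Bmat C)
  rw [← N.Tmat_eq C, N.det_Tmat C, Matrix.invOf_eq_nonsing_inv] at hfb
  rw [hvm, N.L_eq C hC L hL, mul_comm]
  exact hfb.symm

end Superport
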